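/- The signed function u ↦ sgn(u-1)·√(2(u - 1 - ln u)) is strictly increasing on (0, ∞), equal to 0 at u = 1. -/

import Mathlib

private lemma f_hasDeriv (u : ℝ) (hu : 0 < u) :
    HasDerivAt (fun x : ℝ => x - 1 - Real.log x) (1 - 1/u) u := by
  have h := Real.hasDerivAt_log (ne_of_gt hu)
  have h2 : HasDerivAt (fun x : ℝ => x - 1 - Real.log x) (1 - u⁻¹) u :=
    ((hasDerivAt_id u).sub_const 1).sub h
  simpa [one_div] using h2

private lemma f_cont : ContinuousOn (fun x : ℝ => x - 1 - Real.log x) (Set.Ioi 0) := by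
  exact ((continuousOn_id.sub continuousOn_const).sub
    (Real.continuousOn_log.mono (fun x hx => ne_of_gt hx)))

private lemma f_nonneg {u : ℝ} (hu : 0 < u) : 0 ≤ u - 1 - Real.log u := by
  have := Real.log_le_sub_one_of_pos hu
  linarith

private lemma f_pos {u : ℝ} (hu : 0 < u) (hne : u ≠ 1) : 0 < u - 1 - Real.log u := by
  have := Real.log_lt_sub_one_of_pos hu hne
  linarith

private lemma f_strictMono : StrictMonoOn (fun x : ℝ => x - 1 - Real.log x) (Set.Ici 1) := by
  apply strictMonoOn_of_deriv_pos (convex_Ici 1)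
    (f_cont.mono (fun x hx => show (0:ℝ) < x from lt_of_lt_of_le one_pos hx))
  intro x hx
  rw [interior_Ici] at hx
  have hx1 : (1:ℝ) < x := hx
  rw [(f_hasDeriv x (by linarith)).deriv]
  have : 1/x < 1 := by
    rw [div_lt_one (by linarith)]; exact hx1
  linarith

private lemma f_strictAnti : StrictAntiOn (fun x : ℝ => x - 1 - Real.log x) (Set.Ioc 0 1) := by
  apply strictAntiOn_of_deriv_neg (convex_Ioc 0 1) (f_cont.mono (fun x hx => hx.1))
  intro x hx
  rw [interior_Ioc] at hx
  obtain ⟨hx0, hx1⟩ := hx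
  rw [(f_hasDeriv x hx0).deriv]
  have : 1 < 1/x := by
    rw [lt_div_iff₀ hx0]; linarith
  linarith

/-- The signed function `u ↦ sgn(u-1)·√(2(u - 1 - ln u))` is strictly increasing on
`(0, ∞)` and equals `0` at `u = 1`. -/
theorem G_strictMono (G : ℝ → ℝ)
    (hG : G = fun u : ℝ =>
      if u < 1 then -Real.sqrt (2 * (u - 1 - Real.log u))
      else Real.sqrt (2 * (u - 1 - Real.log u))) :
    StrictMonoOn G (Set.Ioi (0 : ℝ)) ∧ G 1 = 0 := by
  subst hG
  constructor
  · intro a ha b hb hab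
    simp only [Set.mem_Ioi] at ha hb
    dsimp only
    by_cases ha1 : a < 1
    · by_cases hb1 : b < 1
      · rw [if_pos ha1, if_pos hb1]
        have hfa : b - 1 - Real.log b < a - 1 - Real.log a :=
          f_strictAnti ⟨ha, le_of_lt ha1⟩ ⟨hb, le_of_lt hb1⟩ hab
        have hfb := f_nonneg hb
        have := Real.sqrt_lt_sqrt (by linarith) (by linarith :
          2 * (b - 1 - Real.log b) < 2 * (a - 1 - Real.log a))
        linarith
      · rw [if_pos ha1, if_neg hb1]
        have hfa := f_pos ha (ne_of_lt ha1)
        have h1 : 0 < Real.sqrt (2 * (a - 1 - Real.log a)) :=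
          Real.sqrt_pos.mpr (by linarith)
        have h2 : 0 ≤ Real.sqrt (2 * (b - 1 - Real.log b)) := Real.sqrt_nonneg _
        linarith
    · have hb1 : ¬ b < 1 := by push_neg at ha1 ⊢; linarith
      rw [if_neg ha1, if_neg hb1]
      push_neg at ha1 hb1
      have hfab : a - 1 - Real.log a < b - 1 - Real.log b :=
        f_strictMono ha1 hb1 hab
      have hfa := f_nonneg ha
      exact Real.sqrt_lt_sqrt (by linarith) (by linarith)
  · simp
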